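/- Let X be an n×n real matrix and let α > 0 be the maximum eigenvalue of the operator T(Z) = [Xᵀ,[X,Z]] on M_n(ℝ). Then the eigenspace of T for α has dimension at least 2. -/
import Mathlib


open Matrix

lemma trace_transpose_mul_self_pos {n : ℕ} {Z : Matrix (Fin n) (Fin n) ℝ}
    (h : Z ≠ 0) : 0 < Matrix.trace (Zᵀ * Z) := by
  have hform : Matrix.trace (Zᵀ * Z) = ∑ j, ∑ i, (Z i j)^2 := by
    simp [Matrix.trace, Matrix.mul_apply, Matrix.diag, sq]
  rw [hform]
  obtain ⟨i, j, hij⟩ : ∃ i j, Z i j ≠ 0 := by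
    by_contra hc
    push_neg at hc
    exact h (by ext i j; simp [hc])
  have : (0:ℝ) < ∑ i, (Z i j)^2 := by
    apply Finset.sum_pos' (fun k _ => sq_nonneg _)
    exact ⟨i, Finset.mem_univ i, by positivity⟩
  apply Finset.sum_pos' (fun k _ => Finset.sum_nonneg fun l _ => sq_nonneg _)
  exact ⟨j, Finset.mem_univ j, this⟩

theorem stmt_16 (n : ℕ) (X : Matrix (Fin n) (Fin n) ℝ)
    (T : Module.End ℝ (Matrix (Fin n) (Fin n) ℝ))
    (hT : ∀ Y, T Y = Xᵀ * (X * Y - Y * X) - (X * Y - Y * X) * Xᵀ)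
    (α : ℝ) (hpos : 0 < α)
    (heig : Module.End.HasEigenvalue T α)
    (hmax : ∀ β : ℝ, Module.End.HasEigenvalue T β → β ≤ α) :
    2 ≤ Module.finrank ℝ (Module.End.eigenspace T α) := by
  obtain ⟨Z, hZmem, hZne⟩ := heig.exists_hasEigenvector
  have hZ : Xᵀ * (X * Z - Z * X) - (X * Z - Z * X) * Xᵀ = α • Z := by
    rw [← hT]; exact Module.End.mem_eigenspace_iff.mp hZmem
  set C : Matrix (Fin n) (Fin n) ℝ := X * Z - Z * X with hC
  set W : Matrix (Fin n) (Fin n) ℝ := Cᵀ with hW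
  -- C ≠ 0
  have hCne : C ≠ 0 := by
    intro h
    rw [h] at hZ
    simp only [Matrix.mul_zero, Matrix.zero_mul, sub_zero, zero_sub, neg_zero] at hZ
    exact hZne (by simpa [smul_eq_zero, ne_of_gt hpos] using hZ.symm)
  have hWne : W ≠ 0 := by
    intro h
    apply hCne
    have := congrArg Matrix.transpose h
    rw [hW, Matrix.transpose_transpose] at this
    simpa using this
  -- W is an eigenvector for α
  have hWeig : Xᵀ * (X * W - W * X) - (X * W - W * X) * Xᵀ = α • W := by
    have key : α • W = (X * (Xᵀ * C - C * Xᵀ) - (Xᵀ * C - C * Xᵀ) * X)ᵀ := by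
      rw [hZ]
      rw [hW, ← Matrix.transpose_smul]
      congr 1
      rw [hC]
      simp only [Matrix.mul_smul, Matrix.smul_mul, smul_sub]
    rw [key, hW, hC]
    simp only [Matrix.transpose_sub, Matrix.transpose_mul, Matrix.transpose_transpose]
    noncomm_ring
  have hWmem : W ∈ Module.End.eigenspace T α := by
    rw [Module.End.mem_eigenspace_iff, hT]; exact hWeig
  -- orthogonality: trace (Zᵀ * W) = 0
  have horth : Matrix.trace (Zᵀ * W) = 0 := by
    have : Zᵀ * W = (C * Z)ᵀ := by rw [hW, Matrix.transpose_mul]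
    rw [this, Matrix.trace_transpose, hC, sub_mul, Matrix.trace_sub,
      Matrix.trace_mul_comm (X*Z) Z, ← Matrix.mul_assoc, sub_self]
  have horth' : Matrix.trace (Wᵀ * Z) = 0 := by
    have : Wᵀ * Z = (Zᵀ * W)ᵀ := by simp [Matrix.transpose_mul]
    rw [this, Matrix.trace_transpose, horth]
  -- linear independence of the pair in the eigenspace
  set E := Module.End.eigenspace T α
  have hli : LinearIndependent ℝ ![(⟨Z, hZmem⟩ : E), ⟨W, hWmem⟩] := by
    rw [LinearIndependent.pair_iff]
    intro s t hst
    have h0 : s • Z + t • W = 0 := by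
      have := congrArg (Submodule.subtype E) hst
      simpa using this
    have e1 : s * Matrix.trace (Zᵀ * Z) = 0 := by
      have := congrArg (fun M => Matrix.trace (Zᵀ * M)) h0
      simpa [Matrix.mul_add, Matrix.mul_smul, Matrix.trace_add, Matrix.trace_smul,
        horth, smul_eq_mul] using this
    have e2 : t * Matrix.trace (Wᵀ * W) = 0 := by
      have := congrArg (fun M => Matrix.trace (Wᵀ * M)) h0
      simpa [Matrix.mul_add, Matrix.mul_smul, Matrix.trace_add, Matrix.trace_smul,
        horth', smul_eq_mul] using this
    constructor
    · exact (mul_eq_zero.mp e1).resolve_right (ne_of_gt (trace_transpose_mul_self_pos hZne))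
    · exact (mul_eq_zero.mp e2).resolve_right (ne_of_gt (trace_transpose_mul_self_pos hWne))
  simpa using hli.fintype_card_le_finrank
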